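/- Let x ∈ (0,1) be a real number that is not a root of any of the three polynomials f^{(2)}_{12|34}, f^{(2)}_{13|24}, f^{(2)}_{14|23}. Let {ξ_1, ξ_2, ξ_3, ξ_4} be an orthonormal basis of C^4. Then the set of five states {ξ_1, ξ_2, ξ_3, Σ_{j=1}^4 x^{2^j} ξ_j, Σ_{j=1}^4 x^{2·2^j} ξ_j} is an absolutely entangled set in C^2 ⊗ C^2: for every unitary U ∈ U(4), at least one of the five states is mapped by U to a non-product vector. -/
import Mathlib


noncomputable section

open Finset

def ProdVec (d1 d2 : ℕ) (ψ : EuclideanSpace ℂ (Fin d1 × Fin d2)) : Prop :=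
  ∃ (u : Fin d1 → ℂ) (v : Fin d2 → ℂ), ∀ p : Fin d1 × Fin d2, ψ p = u p.1 * v p.2

/-- `fval x i j k l` is the value at `x` of the polynomial `f^{(2)}_{ij|kl}`. -/
def fval (x : ℝ) (i j k l : ℕ) : ℝ :=
  (x ^ (3 * 2 ^ k) + x ^ (3 * 2 ^ l)) ^ 2 *
      ((x ^ (2 * 2 ^ i) + x ^ (2 * 2 ^ j)) * (x ^ (4 * 2 ^ i) + x ^ (4 * 2 ^ j))) -
    (x ^ (3 * 2 ^ i) + x ^ (3 * 2 ^ j)) ^ 2 *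
      ((x ^ (2 * 2 ^ k) + x ^ (2 * 2 ^ l)) * (x ^ (4 * 2 ^ k) + x ^ (4 * 2 ^ l)))


open ComplexConjugate Complex in
private lemma prod_det (ψ : EuclideanSpace ℂ (Fin 2 × Fin 2)) (h : ProdVec 2 2 ψ) :
    ψ (0,0) * ψ (1,1) - ψ (0,1) * ψ (1,0) = 0 := by
  obtain ⟨u, v, huv⟩ := h
  rw [huv (0,0), huv (1,1), huv (0,1), huv (1,0)]
  ring

open ComplexConjugate Complex in
private lemma mulconj_left {z w : ℂ} (h : z * conj w = 0) (hw : w ≠ 0) : z = 0 := by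
  rcases mul_eq_zero.mp h with h | h
  · exact h
  · exact absurd (by simpa using h) hw

open ComplexConjugate Complex in
private lemma mulconj_right {z w : ℂ} (h : z * conj w = 0) (hz : z ≠ 0) : w = 0 := by
  rcases mul_eq_zero.mp h with h | h
  · exact absurd h hz
  · simpa using h

open ComplexConjugate Complex in
private lemma DDunit (A : Fin 4 → (Fin 2 × Fin 2) → ℂ)
    (hC : ∀ pt q : Fin 2 × Fin 2,
      A 0 pt * conj (A 0 q) + A 1 pt * conj (A 1 q) + A 2 pt * conj (A 2 q)
        + A 3 pt * conj (A 3 q) = if pt = q then 1 else 0)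
    (hG : ∀ i j : Fin 4,
      A i (0,0) * conj (A j (0,0)) + A i (0,1) * conj (A j (0,1))
        + A i (1,0) * conj (A j (1,0)) + A i (1,1) * conj (A j (1,1))
        = if i = j then 1 else 0)
    (D : Fin 4 → Fin 4 → ℂ)
    (hD : ∀ i j, D i j = A i (0,0) * A j (1,1) + A j (0,0) * A i (1,1)
        - A i (0,1) * A j (1,0) - A j (0,1) * A i (1,0)) :
    ∀ i j, D i 0 * conj (D j 0) + D i 1 * conj (D j 1) + D i 2 * conj (D j 2)
      + D i 3 * conj (D j 3) = if i = j then 1 else 0 := by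
  intro i j
  have c00_00 : A 0 (0,0) * conj (A 0 (0,0)) + A 1 (0,0) * conj (A 1 (0,0)) + A 2 (0,0) * conj (A 2 (0,0)) + A 3 (0,0) * conj (A 3 (0,0)) = 1 := by simpa using hC (0,0) (0,0)
  have c00_01 : A 0 (0,0) * conj (A 0 (0,1)) + A 1 (0,0) * conj (A 1 (0,1)) + A 2 (0,0) * conj (A 2 (0,1)) + A 3 (0,0) * conj (A 3 (0,1)) = 0 := by simpa using hC (0,0) (0,1)
  have c00_10 : A 0 (0,0) * conj (A 0 (1,0)) + A 1 (0,0) * conj (A 1 (1,0)) + A 2 (0,0) * conj (A 2 (1,0)) + A 3 (0,0) * conj (A 3 (1,0)) = 0 := by simpa using hC (0,0) (1,0)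
  have c00_11 : A 0 (0,0) * conj (A 0 (1,1)) + A 1 (0,0) * conj (A 1 (1,1)) + A 2 (0,0) * conj (A 2 (1,1)) + A 3 (0,0) * conj (A 3 (1,1)) = 0 := by simpa using hC (0,0) (1,1)
  have c01_00 : A 0 (0,1) * conj (A 0 (0,0)) + A 1 (0,1) * conj (A 1 (0,0)) + A 2 (0,1) * conj (A 2 (0,0)) + A 3 (0,1) * conj (A 3 (0,0)) = 0 := by simpa using hC (0,1) (0,0)
  have c01_01 : A 0 (0,1) * conj (A 0 (0,1)) + A 1 (0,1) * conj (A 1 (0,1)) + A 2 (0,1) * conj (A 2 (0,1)) + A 3 (0,1) * conj (A 3 (0,1)) = 1 := by simpa using hC (0,1) (0,1)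
  have c01_10 : A 0 (0,1) * conj (A 0 (1,0)) + A 1 (0,1) * conj (A 1 (1,0)) + A 2 (0,1) * conj (A 2 (1,0)) + A 3 (0,1) * conj (A 3 (1,0)) = 0 := by simpa using hC (0,1) (1,0)
  have c01_11 : A 0 (0,1) * conj (A 0 (1,1)) + A 1 (0,1) * conj (A 1 (1,1)) + A 2 (0,1) * conj (A 2 (1,1)) + A 3 (0,1) * conj (A 3 (1,1)) = 0 := by simpa using hC (0,1) (1,1)
  have c10_00 : A 0 (1,0) * conj (A 0 (0,0)) + A 1 (1,0) * conj (A 1 (0,0)) + A 2 (1,0) * conj (A 2 (0,0)) + A 3 (1,0) * conj (A 3 (0,0)) = 0 := by simpa using hC (1,0) (0,0)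
  have c10_01 : A 0 (1,0) * conj (A 0 (0,1)) + A 1 (1,0) * conj (A 1 (0,1)) + A 2 (1,0) * conj (A 2 (0,1)) + A 3 (1,0) * conj (A 3 (0,1)) = 0 := by simpa using hC (1,0) (0,1)
  have c10_10 : A 0 (1,0) * conj (A 0 (1,0)) + A 1 (1,0) * conj (A 1 (1,0)) + A 2 (1,0) * conj (A 2 (1,0)) + A 3 (1,0) * conj (A 3 (1,0)) = 1 := by simpa using hC (1,0) (1,0)
  have c10_11 : A 0 (1,0) * conj (A 0 (1,1)) + A 1 (1,0) * conj (A 1 (1,1)) + A 2 (1,0) * conj (A 2 (1,1)) + A 3 (1,0) * conj (A 3 (1,1)) = 0 := by simpa using hC (1,0) (1,1)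
  have c11_00 : A 0 (1,1) * conj (A 0 (0,0)) + A 1 (1,1) * conj (A 1 (0,0)) + A 2 (1,1) * conj (A 2 (0,0)) + A 3 (1,1) * conj (A 3 (0,0)) = 0 := by simpa using hC (1,1) (0,0)
  have c11_01 : A 0 (1,1) * conj (A 0 (0,1)) + A 1 (1,1) * conj (A 1 (0,1)) + A 2 (1,1) * conj (A 2 (0,1)) + A 3 (1,1) * conj (A 3 (0,1)) = 0 := by simpa using hC (1,1) (0,1)
  have c11_10 : A 0 (1,1) * conj (A 0 (1,0)) + A 1 (1,1) * conj (A 1 (1,0)) + A 2 (1,1) * conj (A 2 (1,0)) + A 3 (1,1) * conj (A 3 (1,0)) = 0 := by simpa using hC (1,1) (1,0)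
  have c11_11 : A 0 (1,1) * conj (A 0 (1,1)) + A 1 (1,1) * conj (A 1 (1,1)) + A 2 (1,1) * conj (A 2 (1,1)) + A 3 (1,1) * conj (A 3 (1,1)) = 1 := by simpa using hC (1,1) (1,1)
  rw [hD i 0, hD j 0, hD i 1, hD j 1, hD i 2, hD j 2, hD i 3, hD j 3]
  simp only [map_add, map_sub, map_mul]
  linear_combination hG i j + (A i (0,0) * conj (A j (0,0))) * c11_11 + (A i (0,0) * conj (A j (1,1))) * c11_00 - (A i (0,0) * conj (A j (0,1))) * c11_10 - (A i (0,0) * conj (A j (1,0))) * c11_01 + (A i (1,1) * conj (A j (0,0))) * c00_11 + (A i (1,1) * conj (A j (1,1))) * c00_00 - (A i (1,1) * conj (A j (0,1))) * c00_10 - (A i (1,1) * conj (A j (1,0))) * c00_01 - (A i (0,1) * conj (A j (0,0))) * c10_11 - (A i (0,1) * conj (A j (1,1))) * c10_00 + (A i (0,1) * conj (A j (0,1))) * c10_10 + (A i (0,1) * conj (A j (1,0))) * c10_01 - (A i (1,0) * conj (A j (0,0))) * c01_11 - (A i (1,0) * conj (A j (1,1))) * c01_00 + (A i (1,0) * conj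 (A j (0,1))) * c01_10 + (A i (1,0) * conj (A j (1,0))) * c01_01

open ComplexConjugate Complex in
private lemma keyPairing (a b c p q r s : ℂ)
    (N0 : a * conj a + b * conj b + c * conj c = 1)
    (N1 : a * conj a + p * conj p + q * conj q = 1)
    (N2 : b * conj b + p * conj p + r * conj r = 1)
    (N3 : c * conj c + q * conj q + r * conj r + s * conj s = 1)
    (O01 : b * conj p + c * conj q = 0)
    (O02 : a * conj p + c * conj r = 0)
    (O12 : a * conj b + q * conj r = 0)
    (O03 : a * conj q + b * conj r + c * conj s = 0)
    (O13 : a * conj c + p * conj r + q * conj s = 0)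
    (O23 : b * conj c + p * conj q + r * conj s = 0) :
    s = 0 ∧ ((a = 0 ∧ r = 0) ∨ (b = 0 ∧ q = 0) ∨ (c = 0 ∧ p = 0)) := by
  rw [mul_conj, mul_conj, mul_conj] at N0
  rw [mul_conj, mul_conj, mul_conj] at N1
  rw [mul_conj, mul_conj, mul_conj] at N2
  rw [mul_conj, mul_conj, mul_conj, mul_conj] at N3
  have n0 : normSq a + normSq b + normSq c = 1 := by exact_mod_cast N0
  have n1 : normSq a + normSq p + normSq q = 1 := by exact_mod_cast N1
  have n2 : normSq b + normSq p + normSq r = 1 := by exact_mod_cast N2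
  have n3 : normSq c + normSq q + normSq r + normSq s = 1 := by exact_mod_cast N3
  by_cases hc : c = 0
  · -- pairing {0,3},{1,2} : c = p = 0
    have hnc : normSq c = 0 := by rw [hc]; simp
    have hp : p = 0 := by
      by_contra hp
      have hb : b = 0 := mulconj_left (by rw [hc] at O01; simpa using O01) hp
      have ha : a = 0 := mulconj_left (by rw [hc] at O02; simpa using O02) hp
      rw [ha, hb] at n0
      simp at n0
      rw [hnc] at n0; norm_num at n0
    have hs : s = 0 := by
      by_contra hs
      have hq : q = 0 := mulconj_left (by rw [hc, hp] at O13; simpa using O13) hs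
      have hr : r = 0 := mulconj_left (by rw [hc, hp, hq] at O23; simpa using O23) hs
      rw [hp, hq] at n1; rw [hp, hr] at n2
      simp at n1 n2
      nlinarith [n0, n1, n2, normSq_nonneg a, normSq_nonneg b, hnc]
    exact ⟨hs, Or.inr (Or.inr ⟨hc, hp⟩)⟩
  · by_cases hp : p = 0
    · exfalso
      have hq : q = 0 := mulconj_right (by rw [hp] at O01; simpa using O01) hc
      have hr : r = 0 := mulconj_right (by rw [hp] at O02; simpa using O02) hc
      rw [hp, hq] at n1; simp at n1
      have : normSq c = 0 := by nlinarith [normSq_nonneg b, normSq_nonneg c]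
      exact hc (normSq_eq_zero.mp this)
    · by_cases ha : a = 0
      · have hr : r = 0 := mulconj_right (by rw [ha] at O02; simpa using O02) hc
        have hs : s = 0 := mulconj_right (by rw [ha, hr] at O03; simpa using O03) hc
        exact ⟨hs, Or.inl ⟨ha, hr⟩⟩
      · by_cases hb : b = 0
        · have hq : q = 0 := mulconj_right (by rw [hb] at O01; simpa using O01) hc
          by_cases hr : r = 0
          · exfalso
            exact ha (mulconj_left (by rw [hq, hr] at O13; simpa using O13) hc)
          · have hs : s = 0 := mulconj_right (by rw [hb, hq] at O23; simpa using O23) hr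
            exact ⟨hs, Or.inr (Or.inl ⟨hb, hq⟩)⟩
        · -- main case : a b c p all nonzero
          exfalso
          have h12 : q * conj r = -(a * conj b) := by linear_combination O12
          have habne : a * conj b ≠ 0 :=
            mul_ne_zero ha (by simpa using hb)
          have hq : q ≠ 0 := by
            intro h; rw [h] at h12; simp at h12
            rcases h12 with h' | h'
            · exact ha h'
            · exact hb h'
          have hr : r ≠ 0 := by
            intro h; rw [h] at h12; simp at h12
            rcases h12 with h' | h'
            · exact ha h'
            · exact hb h'
          have hδ : a * conj q = b * conj r := by
            have hh : c * (a * conj q - b * conj r) = 0 := by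
              linear_combination a * O01 - b * O02
            rcases mul_eq_zero.mp hh with h | h
            · exact absurd h hc
            · linear_combination h
          have m1 : normSq a * normSq q = normSq b * normSq r := by
            have := congrArg normSq hδ
            simpa [normSq_mul, normSq_conj] using this
          have m2 : normSq a * normSq b = normSq q * normSq r := by
            have := congrArg normSq h12
            simpa [normSq_mul, normSq_conj] using this.symm
          have hQpos : 0 < normSq q := normSq_pos.mpr hq
          have hBpos : 0 < normSq b := normSq_pos.mpr hb
          have hApos : 0 < normSq a := normSq_pos.mpr ha
          have hRpos : 0 < normSq r := normSq_pos.mpr hr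
          have h4 : normSq q * (normSq a ^ 2 - normSq r ^ 2) = 0 := by
            linear_combination normSq a * m1 + normSq r * m2
          have h5 : normSq a ^ 2 = normSq r ^ 2 := by
            rcases mul_eq_zero.mp h4 with h | h
            · exact absurd h (ne_of_gt hQpos)
            · linear_combination h
          have e1 : normSq a = normSq r := by
            have h6 : (normSq a - normSq r) * (normSq a + normSq r) = 0 := by
              linear_combination h5
            rcases mul_eq_zero.mp h6 with h | h
            · linarith
            · nlinarith
          have e2 : normSq b = normSq q := by
            have h7 : normSq a * (normSq b - normSq q) = 0 := by
              linear_combination m2 - normSq q * e1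
            rcases mul_eq_zero.mp h7 with h | h
            · exact absurd h (ne_of_gt hApos)
            · linarith [h]
          have hns : normSq s = 0 := by linarith
          have hs : s = 0 := normSq_eq_zero.mp hns
          rw [hs] at O03
          have hzero : a * conj q = 0 := by
            simp at O03
            linear_combination (O03 + hδ) / 2
          rcases mul_eq_zero.mp hzero with h | h
          · exact ha h
          · exact hq (by simpa using h)

open ComplexConjugate Complex in
private lemma finalContra (t1 t2 t3 t4 : ℝ) (h2 : 0 < t2)
    (b c p q : ℂ)
    (Hb : b * conj b + p * conj p = 1)
    (Hc : c * conj c + q * conj q = 1)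
    (Ho : b * conj c + p * conj q = 0)
    (HI : (t1:ℂ) * ((t3:ℂ) * b + (t4:ℂ) * c) + (t2:ℂ) * ((t3:ℂ) * p + (t4:ℂ) * q) = 0)
    (HII : (t1:ℂ)^2 * ((t3:ℂ)^2 * b + (t4:ℂ)^2 * c) + (t2:ℂ)^2 * ((t3:ℂ)^2 * p + (t4:ℂ)^2 * q) = 0) :
    (t3^3 + t4^3)^2 * ((t1^2 + t2^2) * (t1^4 + t2^4))
      = (t1^3 + t2^3)^2 * ((t3^2 + t4^2) * (t3^4 + t4^4)) := by
  -- conjugated hypotheses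
  have Hoc : conj b * c + conj p * q = 0 := by
    have := congrArg conj Ho
    simp only [map_add, map_mul, Complex.conj_conj, map_zero] at this
    linear_combination this
  have HIc : (t1:ℂ) * ((t3:ℂ) * conj b + (t4:ℂ) * conj c)
      + (t2:ℂ) * ((t3:ℂ) * conj p + (t4:ℂ) * conj q) = 0 := by
    have := congrArg conj HI
    simp only [map_add, map_mul, map_pow, Complex.conj_conj, Complex.conj_ofReal, map_zero] at this
    linear_combination this
  have HIIc : (t1:ℂ)^2 * ((t3:ℂ)^2 * conj b + (t4:ℂ)^2 * conj c)
      + (t2:ℂ)^2 * ((t3:ℂ)^2 * conj p + (t4:ℂ)^2 * conj q) = 0 := by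
    have := congrArg conj HII
    simp only [map_add, map_mul, map_pow, Complex.conj_conj, Complex.conj_ofReal, map_zero] at this
    linear_combination this
  set z1 : ℂ := (t3:ℂ) * b + (t4:ℂ) * c with hz1
  set z2 : ℂ := (t3:ℂ) * p + (t4:ℂ) * q with hz2
  set w1 : ℂ := (t3:ℂ)^2 * b + (t4:ℂ)^2 * c with hw1
  set w2 : ℂ := (t3:ℂ)^2 * p + (t4:ℂ)^2 * q with hw2
  set z1c : ℂ := (t3:ℂ) * conj b + (t4:ℂ) * conj c with hz1c
  set z2c : ℂ := (t3:ℂ) * conj p + (t4:ℂ) * conj q with hz2c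
  set w1c : ℂ := (t3:ℂ)^2 * conj b + (t4:ℂ)^2 * conj c with hw1c
  set w2c : ℂ := (t3:ℂ)^2 * conj p + (t4:ℂ)^2 * conj q with hw2c
  have hE1 : z1c * w1 + z2c * w2 = ((t3:ℂ)^3 + (t4:ℂ)^3) := by
    rw [hz1c, hw1, hz2c, hw2]
    linear_combination ((t3:ℂ))^3 * Hb + ((t4:ℂ))^3 * Hc + (t3:ℂ)*((t4:ℂ))^2 * Hoc
      + ((t3:ℂ))^2*(t4:ℂ) * Ho
  have hE1c : z1 * w1c + z2 * w2c = ((t3:ℂ)^3 + (t4:ℂ)^3) := by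
    rw [hz1, hw1c, hz2, hw2c]
    linear_combination ((t3:ℂ))^3 * Hb + ((t4:ℂ))^3 * Hc + ((t3:ℂ))^2*(t4:ℂ) * Hoc
      + (t3:ℂ)*((t4:ℂ))^2 * Ho
  have hE4 : z1c * z1 + z2c * z2 = ((t3:ℂ)^2 + (t4:ℂ)^2) := by
    rw [hz1, hz1c, hz2, hz2c]
    linear_combination ((t3:ℂ))^2 * Hb + ((t4:ℂ))^2 * Hc + (t3:ℂ)*(t4:ℂ) * Hoc
      + (t3:ℂ)*(t4:ℂ) * Ho
  have hE5 : w1c * w1 + w2c * w2 = ((t3:ℂ)^4 + (t4:ℂ)^4) := by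
    rw [hw1, hw1c, hw2, hw2c]
    linear_combination ((t3:ℂ))^4 * Hb + ((t4:ℂ))^4 * Hc + ((t3:ℂ))^2*((t4:ℂ))^2 * Hoc
      + ((t3:ℂ))^2*((t4:ℂ))^2 * Ho
  clear_value z1 z2 w1 w2 z1c z2c w1c w2c
  have Wf : ((t1:ℂ)^3 + (t2:ℂ)^3) * (z1c * w1) = (t2:ℂ)^3 * ((t3:ℂ)^3 + (t4:ℂ)^3) := by
    linear_combination ((t1:ℂ)^2 * w1) * HIc + (-(t2:ℂ) * z2c) * HII + (t2:ℂ)^3 * hE1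
  have Wfc : ((t1:ℂ)^3 + (t2:ℂ)^3) * (z1 * w1c) = (t2:ℂ)^3 * ((t3:ℂ)^3 + (t4:ℂ)^3) := by
    linear_combination ((t1:ℂ)^2 * w1c) * HI + (-(t2:ℂ) * z2) * HIIc + (t2:ℂ)^3 * hE1c
  have Nz : ((t1:ℂ)^2 + (t2:ℂ)^2) * (z1c * z1) = (t2:ℂ)^2 * ((t3:ℂ)^2 + (t4:ℂ)^2) := by
    linear_combination ((t1:ℂ) * z1) * HIc + (-(t2:ℂ) * z2c) * HI + (t2:ℂ)^2 * hE4
  have Nw : ((t1:ℂ)^4 + (t2:ℂ)^4) * (w1c * w1) = (t2:ℂ)^4 * ((t3:ℂ)^4 + (t4:ℂ)^4) := by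
    linear_combination ((t1:ℂ)^2 * w1) * HIIc + (-(t2:ℂ)^2 * w2c) * HII + (t2:ℂ)^4 * hE5
  have P2 : ((t1:ℂ)^3 + (t2:ℂ)^3)^2 * ((z1c * w1) * (z1 * w1c))
      = ((t2:ℂ)^3 * ((t3:ℂ)^3 + (t4:ℂ)^3))^2 := by
    linear_combination (((t1:ℂ)^3 + (t2:ℂ)^3) * (z1 * w1c)) * Wf
      + ((t2:ℂ)^3 * ((t3:ℂ)^3 + (t4:ℂ)^3)) * Wfc
  have P1 : (((t1:ℂ)^2 + (t2:ℂ)^2) * ((t1:ℂ)^4 + (t2:ℂ)^4)) * ((z1c * z1) * (w1c * w1))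
      = ((t2:ℂ)^2 * ((t3:ℂ)^2 + (t4:ℂ)^2)) * ((t2:ℂ)^4 * ((t3:ℂ)^4 + (t4:ℂ)^4)) := by
    linear_combination (((t1:ℂ)^4 + (t2:ℂ)^4) * (w1c * w1)) * Nz
      + ((t2:ℂ)^2 * ((t3:ℂ)^2 + (t4:ℂ)^2)) * Nw
  have key : ((t1:ℂ)^3 + (t2:ℂ)^3)^2 * (((t2:ℂ)^2 * ((t3:ℂ)^2 + (t4:ℂ)^2)) * ((t2:ℂ)^4 * ((t3:ℂ)^4 + (t4:ℂ)^4)))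
      = (((t1:ℂ)^2 + (t2:ℂ)^2) * ((t1:ℂ)^4 + (t2:ℂ)^4)) * ((t2:ℂ)^3 * ((t3:ℂ)^3 + (t4:ℂ)^3))^2 := by
    linear_combination (((t1:ℂ)^2 + (t2:ℂ)^2) * ((t1:ℂ)^4 + (t2:ℂ)^4)) * P2
      - ((t1:ℂ)^3 + (t2:ℂ)^3)^2 * P1
  have keyR : (t1^3 + t2^3)^2 * ((t2^2 * (t3^2 + t4^2)) * (t2^4 * (t3^4 + t4^4)))
      = ((t1^2 + t2^2) * (t1^4 + t2^4)) * (t2^3 * (t3^3 + t4^3))^2 := by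
    exact_mod_cast key
  have h6 : (t2:ℝ)^6 ≠ 0 := pow_ne_zero 6 (ne_of_gt h2)
  have hKey2 : t2^6 * ((t3^3 + t4^3)^2 * ((t1^2 + t2^2) * (t1^4 + t2^4)))
      = t2^6 * ((t1^3 + t2^3)^2 * ((t3^2 + t4^2) * (t3^4 + t4^4))) := by
    linear_combination (-1 : ℝ) * keyR
  exact mul_left_cancel₀ h6 hKey2

open ComplexConjugate Complex in
theorem stmt19 (x : ℝ) (hx : x ∈ Set.Ioo (0 : ℝ) 1)
    (hroot1 : fval x 1 2 3 4 ≠ 0)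
    (hroot2 : fval x 1 3 2 4 ≠ 0)
    (hroot3 : fval x 1 4 2 3 ≠ 0)
    (ξ : Fin 4 → EuclideanSpace ℂ (Fin 2 × Fin 2))
    (hON : Orthonormal ℂ ξ)
    (ψ : Fin 5 → EuclideanSpace ℂ (Fin 2 × Fin 2))
    (hψ0 : ψ 0 = ξ 0) (hψ1 : ψ 1 = ξ 1) (hψ2 : ψ 2 = ξ 2)
    (hψ3 : ψ 3 = ∑ j : Fin 4, ((x : ℂ) ^ (2 ^ ((j : ℕ) + 1))) • ξ j)
    (hψ4 : ψ 4 = ∑ j : Fin 4, ((x : ℂ) ^ (2 * 2 ^ ((j : ℕ) + 1))) • ξ j) :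
    ∀ U : EuclideanSpace ℂ (Fin 2 × Fin 2) ≃ₗᵢ[ℂ] EuclideanSpace ℂ (Fin 2 × Fin 2),
      ∃ m : Fin 5, ¬ ProdVec 2 2 (U (ψ m)) := by
  classical
  intro U
  by_contra hcontra
  push_neg at hcontra
  have hxpos : (0:ℝ) < x := hx.1
  -- orthonormality of the images
  have hONA : Orthonormal ℂ (fun j => U (ξ j)) := by
    rw [orthonormal_iff_ite] at hON ⊢
    intro i j
    rw [LinearIsometryEquiv.inner_map_map]
    exact hON i j
  -- Gram relations (flipped orientation)
  have hGram : ∀ i j : Fin 4,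
      U (ξ i) (0,0) * conj (U (ξ j) (0,0)) + U (ξ i) (0,1) * conj (U (ξ j) (0,1))
        + U (ξ i) (1,0) * conj (U (ξ j) (1,0)) + U (ξ i) (1,1) * conj (U (ξ j) (1,1))
        = if i = j then 1 else 0 := by
    intro i j
    have h2 := orthonormal_iff_ite.mp hONA j i
    rw [PiLp.inner_apply] at h2
    simp only [Fintype.sum_prod_type, Fin.sum_univ_two, RCLike.inner_apply] at h2
    rw [show (if j = i then (1:ℂ) else 0) = (if i = j then 1 else 0) by simp [eq_comm]] at h2
    linear_combination h2
  -- completeness relations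
  have hComp : ∀ pt q : Fin 2 × Fin 2,
      U (ξ 0) pt * conj (U (ξ 0) q) + U (ξ 1) pt * conj (U (ξ 1) q)
        + U (ξ 2) pt * conj (U (ξ 2) q) + U (ξ 3) pt * conj (U (ξ 3) q)
        = if pt = q then 1 else 0 := by
    have hcard : Fintype.card (Fin 4)
        = Module.finrank ℂ (EuclideanSpace ℂ (Fin 2 × Fin 2)) := by
      simp [finrank_euclideanSpace]
    have hb : Submodule.span ℂ (Set.range (fun j => U (ξ j))) = ⊤ :=
      hONA.linearIndependent.span_eq_top_of_card_eq_finrank hcard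
    let b : OrthonormalBasis (Fin 4) ℂ (EuclideanSpace ℂ (Fin 2 × Fin 2)) :=
      OrthonormalBasis.mk hONA hb.ge
    have hbA : ⇑b = fun j => U (ξ j) := OrthonormalBasis.coe_mk _ _
    intro pt q
    have h2 := b.sum_inner_mul_inner (EuclideanSpace.single pt 1) (EuclideanSpace.single q 1)
    rw [hbA] at h2
    simp only [EuclideanSpace.inner_single_left, EuclideanSpace.inner_single_right,
      map_one, one_mul, mul_one] at h2
    rw [Fin.sum_univ_four] at h2
    rw [h2]
    simp [EuclideanSpace.single_apply, eq_comm]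
  -- the bilinear-form matrix D
  set D : Fin 4 → Fin 4 → ℂ := fun i j =>
    U (ξ i) (0,0) * U (ξ j) (1,1) + U (ξ j) (0,0) * U (ξ i) (1,1)
      - U (ξ i) (0,1) * U (ξ j) (1,0) - U (ξ j) (0,1) * U (ξ i) (1,0) with hDdef
  have hD : ∀ i j, D i j = U (ξ i) (0,0) * U (ξ j) (1,1) + U (ξ j) (0,0) * U (ξ i) (1,1)
      - U (ξ i) (0,1) * U (ξ j) (1,0) - U (ξ j) (0,1) * U (ξ i) (1,0) := fun _ _ => rfl
  have hDD := DDunit (fun j => U (ξ j)) hComp hGram D hD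
  -- determinant-type consequences of the product hypothesis
  have pd0 : U (ξ 0) (0,0) * U (ξ 0) (1,1) - U (ξ 0) (0,1) * U (ξ 0) (1,0) = 0 := by
    have h := prod_det _ (hcontra 0); rw [hψ0] at h; exact h
  have pd1 : U (ξ 1) (0,0) * U (ξ 1) (1,1) - U (ξ 1) (0,1) * U (ξ 1) (1,0) = 0 := by
    have h := prod_det _ (hcontra 1); rw [hψ1] at h; exact h
  have pd2 : U (ξ 2) (0,0) * U (ξ 2) (1,1) - U (ξ 2) (0,1) * U (ξ 2) (1,0) = 0 := by
    have h := prod_det _ (hcontra 2); rw [hψ2] at h; exact h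
  -- diagonal entries vanish
  have d00 : D 0 0 = 0 := by rw [hD]; linear_combination 2 * pd0
  have d11 : D 1 1 = 0 := by rw [hD]; linear_combination 2 * pd1
  have d22 : D 2 2 = 0 := by rw [hD]; linear_combination 2 * pd2
  -- symmetry instances
  have s10 : D 1 0 = D 0 1 := by rw [hD, hD]; ring
  have s20 : D 2 0 = D 0 2 := by rw [hD, hD]; ring
  have s21 : D 2 1 = D 1 2 := by rw [hD, hD]; ring
  have s30 : D 3 0 = D 0 3 := by rw [hD, hD]; ring
  have s31 : D 3 1 = D 1 3 := by rw [hD, hD]; ring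
  have s32 : D 3 2 = D 2 3 := by rw [hD, hD]; ring
  -- unitarity relations in scalar form
  have N0 : D 0 1 * conj (D 0 1) + D 0 2 * conj (D 0 2) + D 0 3 * conj (D 0 3) = 1 := by
    have h := hDD 0 0; rw [if_pos rfl, d00] at h; simpa using h
  have N1 : D 0 1 * conj (D 0 1) + D 1 2 * conj (D 1 2) + D 1 3 * conj (D 1 3) = 1 := by
    have h := hDD 1 1; rw [if_pos rfl, s10, d11] at h; simpa using h
  have N2 : D 0 2 * conj (D 0 2) + D 1 2 * conj (D 1 2) + D 2 3 * conj (D 2 3) = 1 := by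
    have h := hDD 2 2; rw [if_pos rfl, s20, s21, d22] at h; simpa using h
  have N3 : D 0 3 * conj (D 0 3) + D 1 3 * conj (D 1 3) + D 2 3 * conj (D 2 3)
      + D 3 3 * conj (D 3 3) = 1 := by
    have h := hDD 3 3; rw [if_pos rfl, s30, s31, s32] at h; simpa using h
  have O01 : D 0 2 * conj (D 1 2) + D 0 3 * conj (D 1 3) = 0 := by
    have h := hDD 0 1; rw [if_neg (by decide), d00, d11] at h; simpa using h
  have O02 : D 0 1 * conj (D 1 2) + D 0 3 * conj (D 2 3) = 0 := by
    have h := hDD 0 2; rw [if_neg (by decide), d00, s21, d22] at h; simpa using h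
  have O12 : D 0 1 * conj (D 0 2) + D 1 3 * conj (D 2 3) = 0 := by
    have h := hDD 1 2; rw [if_neg (by decide), s10, s20, d11, d22] at h; simpa using h
  have O03 : D 0 1 * conj (D 1 3) + D 0 2 * conj (D 2 3) + D 0 3 * conj (D 3 3) = 0 := by
    have h := hDD 0 3; rw [if_neg (by decide), d00, s31, s32] at h; simpa using h
  have O13 : D 0 1 * conj (D 0 3) + D 1 2 * conj (D 2 3) + D 1 3 * conj (D 3 3) = 0 := by
    have h := hDD 1 3; rw [if_neg (by decide), s10, s30, d11, s32] at h; simpa using h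
  have O23 : D 0 2 * conj (D 0 3) + D 1 2 * conj (D 1 3) + D 2 3 * conj (D 3 3) = 0 := by
    have h := hDD 2 3; rw [if_neg (by decide), s20, s21, s30, s31, d22] at h; simpa using h
  -- the structure result
  obtain ⟨hs, hcase⟩ := keyPairing (D 0 1) (D 0 2) (D 0 3) (D 1 2) (D 1 3) (D 2 3) (D 3 3)
    N0 N1 N2 N3 O01 O02 O12 O03 O13 O23
  -- expansion of the last two states
  have hv3 : ∀ pt : Fin 2 × Fin 2, U (ψ 3) pt =
      (x:ℂ)^2 * U (ξ 0) pt + (x:ℂ)^4 * U (ξ 1) pt + (x:ℂ)^8 * U (ξ 2) pt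
        + (x:ℂ)^16 * U (ξ 3) pt := by
    intro pt
    rw [hψ3, map_sum]
    simp only [map_smul]
    have h3 : ((3:Fin 4):ℕ) = 3 := rfl
    simp [Fin.sum_univ_four, PiLp.smul_apply, smul_eq_mul, h3]
  have hv4 : ∀ pt : Fin 2 × Fin 2, U (ψ 4) pt =
      (x:ℂ)^4 * U (ξ 0) pt + (x:ℂ)^8 * U (ξ 1) pt + (x:ℂ)^16 * U (ξ 2) pt
        + (x:ℂ)^32 * U (ξ 3) pt := by
    intro pt
    rw [hψ4, map_sum]
    simp only [map_smul]
    have h3 : ((3:Fin 4):ℕ) = 3 := rfl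
    simp [Fin.sum_univ_four, PiLp.smul_apply, smul_eq_mul, h3]
  have pd3 : U (ψ 3) (0,0) * U (ψ 3) (1,1) - U (ψ 3) (0,1) * U (ψ 3) (1,0) = 0 :=
    prod_det _ (hcontra 3)
  have pd4 : U (ψ 4) (0,0) * U (ψ 4) (1,1) - U (ψ 4) (0,1) * U (ψ 4) (1,0) = 0 :=
    prod_det _ (hcontra 4)
  rw [hv3 (0,0), hv3 (1,1), hv3 (0,1), hv3 (1,0)] at pd3
  rw [hv4 (0,0), hv4 (1,1), hv4 (0,1), hv4 (1,0)] at pd4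
  have EqI : (x:ℂ)^2*(x:ℂ)^4 * D 0 1 + (x:ℂ)^2*(x:ℂ)^8 * D 0 2 + (x:ℂ)^2*(x:ℂ)^16 * D 0 3
      + (x:ℂ)^4*(x:ℂ)^8 * D 1 2 + (x:ℂ)^4*(x:ℂ)^16 * D 1 3 + (x:ℂ)^8*(x:ℂ)^16 * D 2 3
      + ((x:ℂ)^16)^2/2 * D 3 3 = 0 := by
    rw [hD 0 1, hD 0 2, hD 0 3, hD 1 2, hD 1 3, hD 2 3, hD 3 3]
    linear_combination pd3 - ((x:ℂ)^2)^2 * pd0 - ((x:ℂ)^4)^2 * pd1 - ((x:ℂ)^8)^2 * pd2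
  have EqII : (x:ℂ)^4*(x:ℂ)^8 * D 0 1 + (x:ℂ)^4*(x:ℂ)^16 * D 0 2 + (x:ℂ)^4*(x:ℂ)^32 * D 0 3
      + (x:ℂ)^8*(x:ℂ)^16 * D 1 2 + (x:ℂ)^8*(x:ℂ)^32 * D 1 3 + (x:ℂ)^16*(x:ℂ)^32 * D 2 3
      + ((x:ℂ)^32)^2/2 * D 3 3 = 0 := by
    rw [hD 0 1, hD 0 2, hD 0 3, hD 1 2, hD 1 3, hD 2 3, hD 3 3]
    linear_combination pd4 - ((x:ℂ)^4)^2 * pd0 - ((x:ℂ)^8)^2 * pd1 - ((x:ℂ)^16)^2 * pd2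
  rcases hcase with ⟨ha0, hr0⟩ | ⟨hb0, hq0⟩ | ⟨hc0, hp0⟩
  · -- pairing {0,1} | {2,3} : contradicts hroot1
    have Hb : D 0 2 * conj (D 0 2) + D 1 2 * conj (D 1 2) = 1 := by
      have h := N2; rw [hr0] at h; simpa using h
    have Hc : D 0 3 * conj (D 0 3) + D 1 3 * conj (D 1 3) = 1 := by
      have h := N3; rw [hr0, hs] at h; simpa using h
    have Ho : D 0 2 * conj (D 0 3) + D 1 2 * conj (D 1 3) = 0 := by
      have h := O23; rw [hr0] at h; simpa using h
    have HI : ((x^2:ℝ):ℂ) * (((x^8:ℝ):ℂ) * D 0 2 + ((x^16:ℝ):ℂ) * D 0 3)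
        + ((x^4:ℝ):ℂ) * (((x^8:ℝ):ℂ) * D 1 2 + ((x^16:ℝ):ℂ) * D 1 3) = 0 := by
      push_cast
      linear_combination EqI - (x:ℂ)^2*(x:ℂ)^4 * ha0 - (x:ℂ)^8*(x:ℂ)^16 * hr0
        - ((x:ℂ)^16)^2/2 * hs
    have HII : ((x^2:ℝ):ℂ)^2 * (((x^8:ℝ):ℂ)^2 * D 0 2 + ((x^16:ℝ):ℂ)^2 * D 0 3)
        + ((x^4:ℝ):ℂ)^2 * (((x^8:ℝ):ℂ)^2 * D 1 2 + ((x^16:ℝ):ℂ)^2 * D 1 3) = 0 := by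
      push_cast
      linear_combination EqII - (x:ℂ)^4*(x:ℂ)^8 * ha0 - (x:ℂ)^16*(x:ℂ)^32 * hr0
        - ((x:ℂ)^32)^2/2 * hs
    have hres := finalContra (x^2) (x^4) (x^8) (x^16) (by positivity)
      (D 0 2) (D 0 3) (D 1 2) (D 1 3) Hb Hc Ho HI HII
    apply hroot1
    simp only [fval]
    norm_num
    linear_combination hres
  · -- pairing {0,2} | {1,3} : contradicts hroot2
    have Hb : D 0 1 * conj (D 0 1) + D 1 2 * conj (D 1 2) = 1 := by
      have h := N1; rw [hq0] at h; simpa using h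
    have Hc : D 0 3 * conj (D 0 3) + D 2 3 * conj (D 2 3) = 1 := by
      have h := N3; rw [hq0, hs] at h; simpa using h
    have Ho : D 0 1 * conj (D 0 3) + D 1 2 * conj (D 2 3) = 0 := by
      have h := O13; rw [hq0] at h; simpa using h
    have HI : ((x^2:ℝ):ℂ) * (((x^4:ℝ):ℂ) * D 0 1 + ((x^16:ℝ):ℂ) * D 0 3)
        + ((x^8:ℝ):ℂ) * (((x^4:ℝ):ℂ) * D 1 2 + ((x^16:ℝ):ℂ) * D 2 3) = 0 := by
      push_cast
      linear_combination EqI - (x:ℂ)^2*(x:ℂ)^8 * hb0 - (x:ℂ)^4*(x:ℂ)^16 * hq0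
        - ((x:ℂ)^16)^2/2 * hs
    have HII : ((x^2:ℝ):ℂ)^2 * (((x^4:ℝ):ℂ)^2 * D 0 1 + ((x^16:ℝ):ℂ)^2 * D 0 3)
        + ((x^8:ℝ):ℂ)^2 * (((x^4:ℝ):ℂ)^2 * D 1 2 + ((x^16:ℝ):ℂ)^2 * D 2 3) = 0 := by
      push_cast
      linear_combination EqII - (x:ℂ)^4*(x:ℂ)^16 * hb0 - (x:ℂ)^8*(x:ℂ)^32 * hq0
        - ((x:ℂ)^32)^2/2 * hs
    have hres := finalContra (x^2) (x^8) (x^4) (x^16) (by positivity)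
      (D 0 1) (D 0 3) (D 1 2) (D 2 3) Hb Hc Ho HI HII
    apply hroot2
    simp only [fval]
    norm_num
    linear_combination hres
  · -- pairing {0,3} | {1,2} : contradicts hroot3
    have Hb : D 0 1 * conj (D 0 1) + D 1 3 * conj (D 1 3) = 1 := by
      have h := N1; rw [hp0] at h; simpa using h
    have Hc : D 0 2 * conj (D 0 2) + D 2 3 * conj (D 2 3) = 1 := by
      have h := N2; rw [hp0] at h; simpa using h
    have Ho : D 0 1 * conj (D 0 2) + D 1 3 * conj (D 2 3) = 0 := O12
    have HI : ((x^2:ℝ):ℂ) * (((x^4:ℝ):ℂ) * D 0 1 + ((x^8:ℝ):ℂ) * D 0 2)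
        + ((x^16:ℝ):ℂ) * (((x^4:ℝ):ℂ) * D 1 3 + ((x^8:ℝ):ℂ) * D 2 3) = 0 := by
      push_cast
      linear_combination EqI - (x:ℂ)^2*(x:ℂ)^16 * hc0 - (x:ℂ)^4*(x:ℂ)^8 * hp0
        - ((x:ℂ)^16)^2/2 * hs
    have HII : ((x^2:ℝ):ℂ)^2 * (((x^4:ℝ):ℂ)^2 * D 0 1 + ((x^8:ℝ):ℂ)^2 * D 0 2)
        + ((x^16:ℝ):ℂ)^2 * (((x^4:ℝ):ℂ)^2 * D 1 3 + ((x^8:ℝ):ℂ)^2 * D 2 3) = 0 := by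
      push_cast
      linear_combination EqII - (x:ℂ)^4*(x:ℂ)^32 * hc0 - (x:ℂ)^8*(x:ℂ)^16 * hp0
        - ((x:ℂ)^32)^2/2 * hs
    have hres := finalContra (x^2) (x^16) (x^4) (x^8) (by positivity)
      (D 0 1) (D 0 2) (D 1 3) (D 2 3) Hb Hc Ho HI HII
    apply hroot3
    simp only [fval]
    norm_num
    linear_combination hres
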